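/- Suppose the digraph of W is quasi-strongly connected and structurally balanced with gauge g for the full node set. Then for every nominal prescribed-time trajectory X with parameters ρ1, ρ2 > 0 and prescribed time T1 > 0, there exists c ∈ ℝ such that X t k = g k · c for all nodes k and all t ≥ T1 (prescribed-time bipartite consensus within the preassigned time T1). -/

import Mathlib

open Matrix

/-- Time-varying gain: `μ_T(t) = κ/(T − t)` for `0 ≤ t < T`, `0` otherwise. -/
noncomputable def gain (κ T t : ℝ) : ℝ := if 0 ≤ t ∧ t < T then κ / (T - t) else 0

/-- Signed Laplacian `L = D − W` with `D k k = ∑_l |W k l|`. -/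
noncomputable def sLap {N : ℕ} (W : Matrix (Fin N) (Fin N) ℝ) : Matrix (Fin N) (Fin N) ℝ :=
  Matrix.diagonal (fun k => ∑ l, |W k l|) - W

/-- Node `i` reaches node `j`: reflexive–transitive closure of the edge relation
`E i j ↔ W j i ≠ 0`. -/
def Reaches {N : ℕ} (W : Matrix (Fin N) (Fin N) ℝ) : Fin N → Fin N → Prop :=
  Relation.ReflTransGen (fun i j => W j i ≠ 0)

def StronglyConnected {N : ℕ} (W : Matrix (Fin N) (Fin N) ℝ) : Prop :=
  ∀ i j, Reaches W i j

def QuasiStronglyConnected {N : ℕ} (W : Matrix (Fin N) (Fin N) ℝ) : Prop :=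
  ∃ r, ∀ j, Reaches W r j

def WeaklyConnected {N : ℕ} (W : Matrix (Fin N) (Fin N) ℝ) : Prop :=
  ∀ i j, Relation.ReflTransGen (fun a b => W b a ≠ 0 ∨ W a b ≠ 0) i j

/-- `k` is a leader: every node reaching `k` is reached back by `k`. -/
def IsLeader {N : ℕ} (W : Matrix (Fin N) (Fin N) ℝ) (k : Fin N) : Prop :=
  ∀ j, Reaches W j k → Reaches W k j

/-- Closed strong component of a leader `k`. -/
def CSC {N : ℕ} (W : Matrix (Fin N) (Fin N) ℝ) (k : Fin N) : Set (Fin N) :=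
  {j | Reaches W j k ∧ Reaches W k j}

/-- A gauge for a node set `S`. -/
def IsGauge {N : ℕ} (W : Matrix (Fin N) (Fin N) ℝ) (S : Set (Fin N)) (g : Fin N → ℝ) : Prop :=
  (∀ k ∈ S, g k = 1 ∨ g k = -1) ∧ ∀ k ∈ S, ∀ l ∈ S, g k * W k l * g l = |W k l|

/-- Nominal prescribed-time trajectory of the protocol (4). -/
def NominalTraj {N : ℕ} (W : Matrix (Fin N) (Fin N) ℝ) (κ ρ1 ρ2 T1 : ℝ)
    (X : ℝ → Fin N → ℝ) : Prop :=
  Continuous X ∧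
  ∀ t : ℝ, 0 ≤ t → t ≠ T1 →
    HasDerivAt X ((-(ρ1 + ρ2 * gain κ T1 t)) • (sLap W).mulVec (X t)) t


open NormedSpace Finset

attribute [local instance] Matrix.linftyOpNormedAddCommGroup Matrix.linftyOpNormedRing
  Matrix.linftyOpNormedAlgebra

namespace PTBC

variable {N : ℕ}

noncomputable def mvCLM (v : Fin N → ℝ) : Matrix (Fin N) (Fin N) ℝ →L[ℝ] (Fin N → ℝ) :=
  LinearMap.toContinuousLinearMap
  { toFun := fun P => P.mulVec v
    map_add' := fun P Q => Matrix.add_mulVec P Q v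
    map_smul' := fun c P => Matrix.smul_mulVec c P v }

lemma mvCLM_apply (v : Fin N → ℝ) (P : Matrix (Fin N) (Fin N) ℝ) : mvCLM v P = P.mulVec v := rfl

noncomputable def entryCLM (k l : Fin N) : Matrix (Fin N) (Fin N) ℝ →L[ℝ] ℝ :=
  LinearMap.toContinuousLinearMap
  { toFun := fun P => P k l
    map_add' := fun _ _ => rfl
    map_smul' := fun _ _ => rfl }

lemma exp_mulVec_of_kernel {B : Matrix (Fin N) (Fin N) ℝ} {v : Fin N → ℝ}
    (h : B.mulVec v = 0) : (exp B).mulVec v = v := by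
  have hs := expSeries_summable' (𝕂 := ℝ) B
  have h1 : (exp B).mulVec v = ∑' n : ℕ, ((n.factorial : ℝ)⁻¹) • (B ^ n).mulVec v := by
    have e : (mvCLM v) (∑' n : ℕ, ((n.factorial : ℝ)⁻¹) • B ^ n)
        = ∑' n : ℕ, ((n.factorial : ℝ)⁻¹) • (B ^ n).mulVec v := by
      have := ContinuousLinearMap.map_tsum (mvCLM v) hs
      rw [this]
      simp [mvCLM_apply, Matrix.smul_mulVec]
    rw [exp_eq_tsum ℝ]
    exact e
  rw [h1]
  have h2 : ∀ n : ℕ, ((n.factorial : ℝ)⁻¹) • (B ^ n).mulVec v = if n = 0 then v else 0 := by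
    intro n
    cases n with
    | zero => simp
    | succ m =>
      have hz : (B ^ (m + 1)).mulVec v = 0 := by
        rw [pow_succ, ← Matrix.mulVec_mulVec, h, Matrix.mulVec_zero]
      simp [hz]
  rw [tsum_congr h2, tsum_ite_eq]

lemma entryCLM_apply (k l : Fin N) (P : Matrix (Fin N) (Fin N) ℝ) : entryCLM k l P = P k l := rfl

lemma exp_entry_eq (A : Matrix (Fin N) (Fin N) ℝ) (k l : Fin N) :
    (exp A) k l = ∑' n : ℕ, ((n.factorial : ℝ)⁻¹) * (A ^ n) k l := by
  have hs := expSeries_summable' (𝕂 := ℝ) A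
  have h1 : exp A = ∑' n : ℕ, ((n.factorial : ℝ)⁻¹) • A ^ n := by
    rw [exp_eq_tsum ℝ]
  have h2 := ContinuousLinearMap.map_tsum (entryCLM k l) hs
  rw [h1]
  simpa [entryCLM_apply, Matrix.smul_apply, smul_eq_mul] using h2

lemma summable_entry (A : Matrix (Fin N) (Fin N) ℝ) (k l : Fin N) :
    Summable fun n : ℕ => ((n.factorial : ℝ)⁻¹) * (A ^ n) k l := by
  have hs := expSeries_summable' (𝕂 := ℝ) A
  have := hs.map (entryCLM k l).toLinearMap.toAddMonoidHom (entryCLM k l).continuous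
  simpa [Function.comp_def, entryCLM_apply] using this


lemma pow_entry_nonneg {A : Matrix (Fin N) (Fin N) ℝ} (h : ∀ k l, 0 ≤ A k l) (n : ℕ) :
    ∀ k l, 0 ≤ (A ^ n) k l := by
  induction n with
  | zero => intro k l; rw [pow_zero, Matrix.one_apply]; positivity
  | succ m ih =>
    intro k l
    rw [pow_succ, Matrix.mul_apply]
    exact Finset.sum_nonneg fun m' _ => mul_nonneg (ih k m') (h m' l)

lemma exp_entry_nonneg {A : Matrix (Fin N) (Fin N) ℝ} (h : ∀ k l, 0 ≤ A k l) (k l : Fin N) :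
    0 ≤ (exp A) k l := by
  rw [exp_entry_eq]
  exact tsum_nonneg fun n => mul_nonneg (by positivity) (pow_entry_nonneg h n k l)

lemma le_exp_entry {A : Matrix (Fin N) (Fin N) ℝ} (h : ∀ k l, 0 ≤ A k l) (n : ℕ) (k l : Fin N) :
    ((n.factorial : ℝ)⁻¹) * (A ^ n) k l ≤ (exp A) k l := by
  rw [exp_entry_eq]
  exact Summable.le_tsum (summable_entry A k l) n
    fun m _ => mul_nonneg (by positivity) (pow_entry_nonneg h m k l)

/-- `exp (c • 1 + C) = e^c • exp C`. -/
lemma exp_smul_one_add (c : ℝ) (C : Matrix (Fin N) (Fin N) ℝ) :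
    exp (c • (1 : Matrix (Fin N) (Fin N) ℝ) + C) = Real.exp c • exp C := by
  have hcomm : Commute (c • (1 : Matrix (Fin N) (Fin N) ℝ)) C :=
    (Commute.one_left C).smul_left c
  rw [Matrix.exp_add_of_commute _ _ hcomm]
  have h1 : c • (1 : Matrix (Fin N) (Fin N) ℝ) = algebraMap ℝ _ c := by
    rw [Algebra.algebraMap_eq_smul_one]
  have h2 : exp (algebraMap ℝ (Matrix (Fin N) (Fin N) ℝ) c) = algebraMap ℝ _ (Real.exp c) := by
    rw [Real.exp_eq_exp_ℝ]; exact (algebraMap_exp_comm c).symm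
  rw [h1, h2, Algebra.algebraMap_eq_smul_one,
    smul_mul_assoc, one_mul]


section V
variable [NeZero N]
noncomputable def supv (z : Fin N → ℝ) : ℝ := Finset.univ.sup' ⟨⟨0, Nat.pos_of_ne_zero (NeZero.ne N)⟩, mem_univ _⟩ z
noncomputable def infv (z : Fin N → ℝ) : ℝ := Finset.univ.inf' ⟨⟨0, Nat.pos_of_ne_zero (NeZero.ne N)⟩, mem_univ _⟩ z

lemma le_supv (z : Fin N → ℝ) (k : Fin N) : z k ≤ supv z := Finset.le_sup' z (mem_univ k)
lemma infv_le (z : Fin N → ℝ) (k : Fin N) : infv z ≤ z k := Finset.inf'_le z (mem_univ k)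
lemma infv_le_supv (z : Fin N → ℝ) : infv z ≤ supv z :=
  le_trans (infv_le z ⟨0, Nat.pos_of_ne_zero (NeZero.ne N)⟩) (le_supv z _)

lemma mulVec_upper {P : Matrix (Fin N) (Fin N) ℝ} {r : Fin N}
    (hpos : ∀ k l, 0 ≤ P k l) (hrow : ∀ k, ∑ l, P k l = 1) {ε : ℝ}
    (hcol : ∀ k, ε ≤ P k r) (z : Fin N → ℝ) (k : Fin N) :
    P.mulVec z k ≤ supv z - ε * (supv z - z r) := by
  have hM := le_supv z
  have key : P.mulVec z k = P k r * z r + ∑ l ∈ univ.erase r, P k l * z l := by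
    rw [Matrix.mulVec, dotProduct]
    exact (Finset.add_sum_erase _ _ (mem_univ r)).symm
  have h2 : ∑ l ∈ univ.erase r, P k l * z l ≤ ∑ l ∈ univ.erase r, P k l * supv z :=
    Finset.sum_le_sum fun l _ => mul_le_mul_of_nonneg_left (hM l) (hpos k l)
  have h3 : ∑ l ∈ univ.erase r, P k l * supv z = (1 - P k r) * supv z := by
    rw [← Finset.sum_mul]
    congr 1
    have := Finset.add_sum_erase univ (fun l => P k l) (mem_univ r)
    rw [hrow k] at this
    linarith
  have h4 : P k r * z r + (1 - P k r) * supv z = supv z - P k r * (supv z - z r) := by ring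
  have h5 : ε * (supv z - z r) ≤ P k r * (supv z - z r) :=
    mul_le_mul_of_nonneg_right (hcol k) (by linarith [hM r])
  calc P.mulVec z k = P k r * z r + ∑ l ∈ univ.erase r, P k l * z l := key
    _ ≤ P k r * z r + (1 - P k r) * supv z := by linarith
    _ = supv z - P k r * (supv z - z r) := h4
    _ ≤ supv z - ε * (supv z - z r) := by linarith

lemma mulVec_lower {P : Matrix (Fin N) (Fin N) ℝ} {r : Fin N}
    (hpos : ∀ k l, 0 ≤ P k l) (hrow : ∀ k, ∑ l, P k l = 1) {ε : ℝ}
    (hcol : ∀ k, ε ≤ P k r) (z : Fin N → ℝ) (k : Fin N) :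
    infv z + ε * (z r - infv z) ≤ P.mulVec z k := by
  have h := mulVec_upper (P := P) (r := r) hpos hrow hcol (fun l => -(z l)) k
  have hneg : P.mulVec (fun l => -(z l)) k = -(P.mulVec z k) := by
    simp [Matrix.mulVec, dotProduct, mul_comm, Finset.sum_neg_distrib]
  have hsup : supv (fun l => -(z l)) = -(infv z) := by
    have h1 : supv (fun l => -(z l)) ≤ -(infv z) := by
      apply Finset.sup'_le
      intro l _
      have := infv_le z l
      linarith
    have h2 : -(supv (fun l => -(z l))) ≤ infv z := by
      apply Finset.le_inf'
      intro l _
      have := le_supv (fun l => -(z l)) l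
      linarith
    linarith
  rw [hneg, hsup] at h
  linarith


lemma V_contract {P : Matrix (Fin N) (Fin N) ℝ} {r : Fin N}
    (hpos : ∀ k l, 0 ≤ P k l) (hrow : ∀ k, ∑ l, P k l = 1) {ε : ℝ}
    (hcol : ∀ k, ε ≤ P k r) (z : Fin N → ℝ) :
    supv (P.mulVec z) - infv (P.mulVec z) ≤ (1 - ε) * (supv z - infv z) := by
  have h1 : supv (P.mulVec z) ≤ supv z - ε * (supv z - z r) :=
    Finset.sup'_le _ _ fun k _ => mulVec_upper hpos hrow hcol z k
  have h2 : infv z + ε * (z r - infv z) ≤ infv (P.mulVec z) :=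
    Finset.le_inf' _ _ fun k _ => mulVec_lower hpos hrow hcol z k
  have : supv (P.mulVec z) - infv (P.mulVec z) ≤ (supv z - infv z) - ε * (supv z - infv z) := by
    linarith
  calc supv (P.mulVec z) - infv (P.mulVec z)
      ≤ (supv z - infv z) - ε * (supv z - infv z) := this
    _ = (1 - ε) * (supv z - infv z) := by ring

end V

noncomputable def Wabs {N : ℕ} (W : Matrix (Fin N) (Fin N) ℝ) : Matrix (Fin N) (Fin N) ℝ :=
  Matrix.of fun k l => |W k l|

noncomputable def Bm {N : ℕ} (W : Matrix (Fin N) (Fin N) ℝ) : Matrix (Fin N) (Fin N) ℝ :=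
  -(sLap (Wabs W))

noncomputable def dd {N : ℕ} (W : Matrix (Fin N) (Fin N) ℝ) : ℝ := 1 + ∑ k, ∑ l, |W k l|

noncomputable def Am {N : ℕ} (W : Matrix (Fin N) (Fin N) ℝ) : Matrix (Fin N) (Fin N) ℝ :=
  dd W • (1 : Matrix (Fin N) (Fin N) ℝ) + Bm W

lemma Bm_apply (W : Matrix (Fin N) (Fin N) ℝ) (k l : Fin N) :
    Bm W k l = |W k l| - if k = l then ∑ m, |W k m| else 0 := by
  simp only [Bm, sLap, Wabs, Matrix.neg_apply, Matrix.sub_apply, Matrix.diagonal_apply,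
    Matrix.of_apply, abs_abs]
  split <;> ring

lemma Am_apply (W : Matrix (Fin N) (Fin N) ℝ) (k l : Fin N) :
    Am W k l = (if k = l then dd W else 0) + Bm W k l := by
  by_cases h : k = l <;>
    simp [Am, Matrix.add_apply, Matrix.smul_apply, Matrix.one_apply, h]

lemma rowsum_le (W : Matrix (Fin N) (Fin N) ℝ) (k : Fin N) :
    ∑ m, |W k m| ≤ dd W - 1 := by
  have : ∑ m, |W k m| ≤ ∑ k', ∑ m, |W k' m| :=
    Finset.single_le_sum (f := fun k' => ∑ m, |W k' m|)
      (fun i _ => Finset.sum_nonneg fun m _ => abs_nonneg _) (mem_univ k)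
  simp only [dd]
  linarith

lemma Am_nonneg (W : Matrix (Fin N) (Fin N) ℝ) (hdiag : ∀ k, W k k = 0) (k l : Fin N) :
    0 ≤ Am W k l := by
  rw [Am_apply, Bm_apply]
  by_cases h : k = l
  · subst h
    simp only [if_pos rfl, if_true, eq_self_iff_true, hdiag k, abs_zero]
    have := rowsum_le W k
    linarith
  · simp only [if_neg h, add_zero, zero_add, sub_zero]
    positivity

lemma Am_diag_pos (W : Matrix (Fin N) (Fin N) ℝ) (hdiag : ∀ k, W k k = 0) (k : Fin N) :
    0 < Am W k k := by
  rw [Am_apply, Bm_apply]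
  simp only [if_pos rfl, if_true, eq_self_iff_true, hdiag k, abs_zero]
  have := rowsum_le W k
  linarith

lemma Am_edge_pos (W : Matrix (Fin N) (Fin N) ℝ) {k l : Fin N} (h : W k l ≠ 0) (hne : k ≠ l) :
    0 < Am W k l := by
  rw [Am_apply, Bm_apply]
  simp [hne]
  exact h

lemma Bm_mulVec_one (W : Matrix (Fin N) (Fin N) ℝ) :
    (Bm W).mulVec (fun _ => 1) = 0 := by
  funext k
  simp only [Matrix.mulVec, dotProduct, mul_one, Pi.zero_apply]
  rw [Finset.sum_congr rfl fun l _ => Bm_apply W k l]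
  simp [Finset.sum_sub_distrib]

lemma pow_Am_pos (W : Matrix (Fin N) (Fin N) ℝ) (hdiag : ∀ k, W k k = 0) (r : Fin N)
    {k : Fin N} (h : Reaches W r k) : ∃ n : ℕ, 0 < (Am W ^ n) k r := by
  induction h with
  | refl => exact ⟨0, by simp [Matrix.one_apply]⟩
  | @tail j k hrj hedge ih =>
    obtain ⟨n, hn⟩ := ih
    by_cases hkj : k = j
    · exact ⟨n, hkj ▸ hn⟩
    · refine ⟨n + 1, ?_⟩
      rw [pow_succ', Matrix.mul_apply]
      apply Finset.sum_pos'
      · intro m _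
        exact mul_nonneg (Am_nonneg W hdiag k m) (pow_entry_nonneg (Am_nonneg W hdiag) n m r)
      · exact ⟨j, mem_univ j, mul_pos (Am_edge_pos W hedge hkj) hn⟩


lemma smul_Bm_decomp (W : Matrix (Fin N) (Fin N) ℝ) (w : ℝ) :
    w • Bm W = (-(w * dd W)) • (1 : Matrix (Fin N) (Fin N) ℝ) + w • Am W := by
  have h : Am W = dd W • (1 : Matrix (Fin N) (Fin N) ℝ) + Bm W := rfl
  rw [h]
  module

lemma exp_smul_Bm (W : Matrix (Fin N) (Fin N) ℝ) (w : ℝ) :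
    exp (w • Bm W) = Real.exp (-(w * dd W)) • exp (w • Am W) := by
  rw [smul_Bm_decomp, exp_smul_one_add]

lemma smul_Am_nonneg (W : Matrix (Fin N) (Fin N) ℝ) (hdiag : ∀ k, W k k = 0) {w : ℝ}
    (hw : 0 ≤ w) : ∀ k l, 0 ≤ (w • Am W) k l := fun k l =>
  mul_nonneg hw (Am_nonneg W hdiag k l)

lemma expB_nonneg (W : Matrix (Fin N) (Fin N) ℝ) (hdiag : ∀ k, W k k = 0) {w : ℝ}
    (hw : 0 ≤ w) (k l : Fin N) : 0 ≤ (exp (w • Bm W)) k l := by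
  rw [exp_smul_Bm]
  exact mul_nonneg (Real.exp_nonneg _) (exp_entry_nonneg (smul_Am_nonneg W hdiag hw) k l)

lemma expB_rowsum (W : Matrix (Fin N) (Fin N) ℝ) (w : ℝ) (k : Fin N) :
    ∑ l, (exp (w • Bm W)) k l = 1 := by
  have hker : (w • Bm W).mulVec (fun _ => 1) = 0 := by
    rw [Matrix.smul_mulVec, Bm_mulVec_one, smul_zero]
  have := congrFun (exp_mulVec_of_kernel hker) k
  simpa [Matrix.mulVec, dotProduct] using this

lemma expB_col_pos (W : Matrix (Fin N) (Fin N) ℝ) (hdiag : ∀ k, W k k = 0) {r : Fin N}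
    (hr : ∀ j, Reaches W r j) (k : Fin N) : 0 < (exp ((1 : ℝ) • Bm W)) k r := by
  rw [exp_smul_Bm]
  apply mul_pos (Real.exp_pos _)
  obtain ⟨n, hn⟩ := pow_Am_pos W hdiag r (hr k)
  have hle := le_exp_entry (smul_Am_nonneg W hdiag (zero_le_one)) n k r
  rw [one_smul] at hle ⊢
  have : 0 < ((n.factorial : ℝ)⁻¹) * (Am W ^ n) k r := by positivity
  linarith

/-- Derivative of the matrix-exponential flow. -/
lemma hasDerivAt_expFlow (C : Matrix (Fin N) (Fin N) ℝ) (y0 : Fin N → ℝ)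
    {s : ℝ → ℝ} {a t : ℝ} (hs : HasDerivAt s a t) :
    HasDerivAt (fun t => (exp (s t • C)).mulVec y0)
      (a • C.mulVec ((exp (s t • C)).mulVec y0)) t := by
  have h1 : HasDerivAt (fun u : ℝ => exp (u • C)) (C * exp (s t • C)) (s t) :=
    hasDerivAt_exp_smul_const' C (s t)
  have h2 : HasDerivAt (fun t => exp (s t • C)) (a • (C * exp (s t • C))) t :=
    HasDerivAt.scomp t h1 hs
  have h3 := ((mvCLM y0).hasFDerivAt).comp_hasDerivAt t h2
  have h4 : (mvCLM y0) (a • (C * exp (s t • C)))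
      = a • C.mulVec ((exp (s t • C)).mulVec y0) := by
    rw [_root_.map_smul, mvCLM_apply, ← Matrix.mulVec_mulVec]
  rw [← h4]
  exact h3

lemma gain_nonneg {κ T1 : ℝ} (hκ : 0 ≤ κ) (u : ℝ) : 0 ≤ gain κ T1 u := by
  unfold gain
  split
  · rename_i h
    have : 0 < T1 - u := by linarith [h.2]
    positivity
  · exact le_refl 0

lemma gain_le {κ T1 u b : ℝ} (hκ : 0 ≤ κ) (hub : u ≤ b) (hb : b < T1) :
    gain κ T1 u ≤ κ / (T1 - b) := by
  have hTb : 0 < T1 - b := by linarith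
  unfold gain
  split
  · rename_i h
    have h1 : 0 < T1 - u := by linarith [h.2]
    exact div_le_div_of_nonneg_left hκ hTb (by linarith)
  · positivity

/-- The time-rescaling function. -/
noncomputable def sfun (ρ1 ρ2 κ T1 t : ℝ) : ℝ :=
  ρ1 * t + ρ2 * κ * (Real.log T1 - Real.log (T1 - t))

lemma sfun_zero (ρ1 ρ2 κ T1 : ℝ) : sfun ρ1 ρ2 κ T1 0 = 0 := by
  simp [sfun]

lemma hasDerivAt_sfun {ρ1 ρ2 κ T1 t : ℝ} (ht : t < T1) :
    HasDerivAt (fun t => sfun ρ1 ρ2 κ T1 t) (ρ1 + ρ2 * (κ / (T1 - t))) t := by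
  have hne : T1 - t ≠ 0 := by intro h; linarith [sub_eq_zero.mp h]
  have h1 : HasDerivAt (fun t : ℝ => T1 - t) (-1) t := by
    simpa using (hasDerivAt_id t).const_sub T1
  have h2 : HasDerivAt (fun t : ℝ => Real.log (T1 - t)) ((-1) / (T1 - t)) t := h1.log hne
  have h3 : HasDerivAt (fun t : ℝ => ρ1 * t) ρ1 t := by
    simpa using (hasDerivAt_id t).const_mul ρ1
  have h4 : HasDerivAt (fun t : ℝ => ρ2 * κ * (Real.log T1 - Real.log (T1 - t)))
      (ρ2 * κ * (0 - (-1) / (T1 - t))) t :=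
    ((hasDerivAt_const t (Real.log T1)).sub h2).const_mul (ρ2 * κ)
  have h5 := h3.add h4
  have e : ρ1 + ρ2 * (κ / (T1 - t)) = ρ1 + ρ2 * κ * (0 - (-1) / (T1 - t)) := by ring
  rw [e]
  exact h5

lemma sfun_mono {ρ1 ρ2 κ T1 : ℝ} (hρ1 : 0 < ρ1) (hρ2 : 0 < ρ2) (hκ : 0 < κ)
    {t1 t2 : ℝ} (h1 : t1 ≤ t2) (h2 : t2 < T1) :
    sfun ρ1 ρ2 κ T1 t1 ≤ sfun ρ1 ρ2 κ T1 t2 := by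
  rcases eq_or_lt_of_le h1 with rfl | hlt
  · exact le_refl _
  have hmono : StrictMonoOn (fun t => sfun ρ1 ρ2 κ T1 t) (Set.Icc t1 t2) := by
    apply strictMonoOn_of_deriv_pos (convex_Icc _ _)
    · intro x hx
      exact (hasDerivAt_sfun (lt_of_le_of_lt hx.2 h2)).continuousAt.continuousWithinAt
    · intro x hx
      rw [interior_Icc] at hx
      have hxT : x < T1 := lt_trans hx.2 h2
      rw [(hasDerivAt_sfun hxT).deriv]
      have : 0 < T1 - x := by linarith
      positivity
  exact (hmono (Set.left_mem_Icc.mpr h1) (Set.right_mem_Icc.mpr h1) hlt).le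

lemma sfun_escape {ρ1 ρ2 κ T1 : ℝ} (hρ1 : 0 < ρ1) (hρ2 : 0 < ρ2) (hκ : 0 < κ)
    (hT1 : 0 < T1) (n : ℕ) :
    ∃ b, 0 ≤ b ∧ b < T1 ∧ (n : ℝ) ≤ sfun ρ1 ρ2 κ T1 b := by
  set δ : ℝ := min T1 (Real.exp (Real.log T1 - n / (ρ2 * κ))) with hδ
  have hδpos : 0 < δ := lt_min hT1 (Real.exp_pos _)
  have hδle : δ ≤ T1 := min_le_left _ _
  refine ⟨T1 - δ, by linarith, by linarith, ?_⟩
  have hlog : Real.log δ ≤ Real.log T1 - n / (ρ2 * κ) := by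
    calc Real.log δ ≤ Real.log (Real.exp (Real.log T1 - n / (ρ2 * κ))) :=
          Real.log_le_log hδpos (min_le_right _ _)
      _ = Real.log T1 - n / (ρ2 * κ) := Real.log_exp _
  have h1 : ρ2 * κ * (Real.log T1 - Real.log δ) ≥ ρ2 * κ * (n / (ρ2 * κ)) := by
    apply mul_le_mul_of_nonneg_left _ (by positivity)
    linarith
  have h2 : ρ2 * κ * (n / (ρ2 * κ)) = n := by field_simp
  have h3 : 0 ≤ ρ1 * (T1 - δ) := by
    apply mul_nonneg hρ1.le; linarith
  unfold sfun
  have : T1 - (T1 - δ) = δ := by ring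
  rw [this]
  linarith

lemma expB_semigroup (W : Matrix (Fin N) (Fin N) ℝ) (u v : ℝ) :
    exp ((u + v) • Bm W) = exp (u • Bm W) * exp (v • Bm W) := by
  rw [add_smul]
  exact exp_add_of_commute (((Commute.refl (Bm W)).smul_left u).smul_right v)

lemma flow_step (W : Matrix (Fin N) (Fin N) ℝ) (y0 : Fin N → ℝ) (u v : ℝ) :
    (exp ((u + v) • Bm W)).mulVec y0
      = (exp (u • Bm W)).mulVec ((exp (v • Bm W)).mulVec y0) := by
  rw [Matrix.mulVec_mulVec, expB_semigroup]

section Flow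
variable [NeZero N]

noncomputable def Vv (z : Fin N → ℝ) : ℝ := supv z - infv z

lemma Vv_nonneg (z : Fin N → ℝ) : 0 ≤ Vv z := by
  have := infv_le_supv z
  unfold Vv
  linarith

lemma sub_le_Vv (z : Fin N → ℝ) (k j : Fin N) : z k - z j ≤ Vv z := by
  have h1 := le_supv z k
  have h2 := infv_le z j
  unfold Vv
  linarith

lemma flow_V_noninc (W : Matrix (Fin N) (Fin N) ℝ) (hdiag : ∀ k, W k k = 0)
    {w : ℝ} (hw : 0 ≤ w) (z : Fin N → ℝ) :
    Vv ((exp (w • Bm W)).mulVec z) ≤ Vv z := by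
  have hN : 0 < N := Nat.pos_of_ne_zero (NeZero.ne N)
  have h := V_contract (P := exp (w • Bm W)) (r := ⟨0, hN⟩)
    (expB_nonneg W hdiag hw) (expB_rowsum W w) (ε := 0)
    (fun k => expB_nonneg W hdiag hw k _) z
  simpa [Vv] using h

lemma flow_V_contract (W : Matrix (Fin N) (Fin N) ℝ) (hdiag : ∀ k, W k k = 0)
    {r : Fin N} (hr : ∀ j, Reaches W r j) :
    ∃ ε : ℝ, 0 < ε ∧ ε ≤ 1 ∧
      ∀ z, Vv ((exp ((1 : ℝ) • Bm W)).mulVec z) ≤ (1 - ε) * Vv z := by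
  have hNE : (Finset.univ : Finset (Fin N)).Nonempty :=
    ⟨⟨0, Nat.pos_of_ne_zero (NeZero.ne N)⟩, mem_univ _⟩
  refine ⟨Finset.univ.inf' hNE (fun k => exp ((1 : ℝ) • Bm W) k r), ?_, ?_, ?_⟩
  · exact (Finset.lt_inf'_iff hNE).mpr fun k _ => expB_col_pos W hdiag hr k
  · refine le_trans (Finset.inf'_le _ (mem_univ r)) ?_
    have h1 := expB_rowsum W (1 : ℝ) r
    have h2 : exp ((1:ℝ) • Bm W) r r ≤ ∑ l, exp ((1:ℝ) • Bm W) r l :=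
      Finset.single_le_sum (f := fun l => exp ((1:ℝ) • Bm W) r l)
        (fun l _ => expB_nonneg W hdiag zero_le_one r l) (mem_univ r)
    linarith
  · intro z
    exact V_contract (expB_nonneg W hdiag zero_le_one) (expB_rowsum W 1)
      (fun k => Finset.inf'_le _ (mem_univ k)) z

end Flow

noncomputable def mulVecCLM (M : Matrix (Fin N) (Fin N) ℝ) : (Fin N → ℝ) →L[ℝ] (Fin N → ℝ) :=
  LinearMap.toContinuousLinearMap M.mulVecLin

lemma mulVecCLM_apply (M : Matrix (Fin N) (Fin N) ℝ) (x : Fin N → ℝ) :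
    mulVecCLM M x = M.mulVec x := rfl

/-- Uniqueness: on `[0, T1)` the trajectory is given by the matrix-exponential flow. -/
lemma sol_eq_expFlow (W : Matrix (Fin N) (Fin N) ℝ)
    {κ ρ1 ρ2 T1 : ℝ} (hκ : 0 < κ) (hρ1 : 0 < ρ1) (hρ2 : 0 < ρ2) (hT1 : 0 < T1)
    {y : ℝ → Fin N → ℝ} (hyc : Continuous y)
    (hy' : ∀ t, 0 ≤ t → t < T1 →
      HasDerivAt y ((-(ρ1 + ρ2 * gain κ T1 t)) • (-(Bm W)).mulVec (y t)) t)
    {b : ℝ} (hb0 : 0 ≤ b) (hb : b < T1) :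
    y b = (exp (sfun ρ1 ρ2 κ T1 b • Bm W)).mulVec (y 0) := by
  set Mc := mulVecCLM (-(Bm W)) with hMc
  set C : ℝ := ρ1 + ρ2 * (κ / (T1 - b)) with hCdef
  have hTb : 0 < T1 - b := by linarith
  have hC : 0 ≤ C := by positivity
  set v : ℝ → (Fin N → ℝ) → (Fin N → ℝ) :=
    fun t x => ((-(ρ1 + ρ2 * gain κ T1 (min t b))) • Mc) x with hv
  set K : NNReal := Real.toNNReal C * ‖Mc‖₊ with hK
  have hcoef : ∀ t : ℝ, 0 ≤ ρ1 + ρ2 * gain κ T1 (min t b) ∧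
      ρ1 + ρ2 * gain κ T1 (min t b) ≤ C := by
    intro t
    constructor
    · have h := gain_nonneg (κ := κ) (T1 := T1) hκ.le (min t b)
      have := mul_nonneg hρ2.le h
      linarith
    · have h := gain_le (κ := κ) hκ.le (min_le_right t b) hb
      have := mul_le_mul_of_nonneg_left h hρ2.le
      rw [hCdef]
      linarith
  have hlip : ∀ t, LipschitzWith K (v t) := by
    intro t
    have h1 : LipschitzWith ‖(-(ρ1 + ρ2 * gain κ T1 (min t b))) • Mc‖₊ (v t) :=
      ((-(ρ1 + ρ2 * gain κ T1 (min t b))) • Mc).lipschitz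
    refine h1.weaken ?_
    have h2 : ‖(-(ρ1 + ρ2 * gain κ T1 (min t b))) • Mc‖ ≤ C * ‖Mc‖ := by
      have hns := norm_smul (-(ρ1 + ρ2 * gain κ T1 (min t b))) Mc
      rw [hns, norm_neg, Real.norm_eq_abs, abs_of_nonneg (hcoef t).1]
      exact mul_le_mul_of_nonneg_right (hcoef t).2 (norm_nonneg _)
    have hKc : (K : ℝ) = C * ‖Mc‖ := by
      rw [hK, NNReal.coe_mul, Real.coe_toNNReal _ hC, coe_nnnorm]
    rw [← NNReal.coe_le_coe, coe_nnnorm, hKc]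
    exact h2
  set Φ : ℝ → Fin N → ℝ :=
    fun t => (exp (sfun ρ1 ρ2 κ T1 t • Bm W)).mulVec (y 0) with hΦ
  have key : Set.EqOn y Φ (Set.Icc 0 b) := by
    apply ODE_solution_unique hlip (hyc.continuousOn)
    · intro t ht
      have htT1 : t < T1 := lt_of_lt_of_le ht.2 hb.le
      have hd := hy' t ht.1 htT1
      have hmin : min t b = t := min_eq_left ht.2.le
      have : v t (y t) = (-(ρ1 + ρ2 * gain κ T1 t)) • (-(Bm W)).mulVec (y t) := by
        rw [hv]
        simp only [ContinuousLinearMap.smul_apply, hmin, hMc, mulVecCLM_apply]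
      rw [this]
      exact hd.hasDerivWithinAt
    · apply ContinuousOn.mono (s := Set.Icc 0 b) ?_ (le_refl _)
      intro t ht
      have htT1 : t < T1 := lt_of_le_of_lt ht.2 hb
      exact (hasDerivAt_expFlow (Bm W) (y 0)
        (hasDerivAt_sfun (ρ1 := ρ1) (ρ2 := ρ2) (κ := κ) htT1)).continuousAt.continuousWithinAt
    · intro t ht
      have htT1 : t < T1 := lt_of_lt_of_le ht.2 hb.le
      have hd := hasDerivAt_expFlow (Bm W) (y 0) (hasDerivAt_sfun (ρ1 := ρ1) (ρ2 := ρ2) (κ := κ) htT1)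
      have hgain : gain κ T1 t = κ / (T1 - t) := by
        unfold gain
        rw [if_pos ⟨ht.1, htT1⟩]
      have heq : v t (Φ t) = (ρ1 + ρ2 * (κ / (T1 - t))) • (Bm W).mulVec (Φ t) := by
        rw [hv]
        simp only [ContinuousLinearMap.smul_apply, min_eq_left ht.2.le, hMc, mulVecCLM_apply,
          hgain, Matrix.neg_mulVec, smul_neg, neg_smul, neg_neg]
      rw [heq]
      exact hd.hasDerivWithinAt
    · rw [hΦ]
      simp [sfun_zero]
  have := key (Set.right_mem_Icc.mpr hb0)
  simpa [hΦ] using this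

/-- After the prescribed time, the trajectory is given by the autonomous flow started
at any `u > T1`. -/
lemma eq_expFlow_after (W : Matrix (Fin N) (Fin N) ℝ) {κ ρ1 ρ2 T1 : ℝ} (hT1 : 0 < T1)
    {X : ℝ → Fin N → ℝ} (hXc : Continuous X)
    (hX' : ∀ t : ℝ, 0 ≤ t → t ≠ T1 →
      HasDerivAt X ((-(ρ1 + ρ2 * gain κ T1 t)) • (sLap W).mulVec (X t)) t)
    {u t2 : ℝ} (hu : T1 < u) (hut2 : u ≤ t2) :
    X t2 = (exp ((t2 - u) • ((-ρ1) • sLap W))).mulVec (X u) := by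
  set BL := (-ρ1) • sLap W with hBL
  set Lc := mulVecCLM (sLap W) with hLc
  set v : ℝ → (Fin N → ℝ) → (Fin N → ℝ) := fun _ x => ((-ρ1) • Lc) x with hv
  have hlip : ∀ t : ℝ, LipschitzWith ‖(-ρ1) • Lc‖₊ (v t) := fun t => ((-ρ1) • Lc).lipschitz
  set Ψ : ℝ → Fin N → ℝ := fun t => (exp ((t - u) • BL)).mulVec (X u) with hΨ
  have key : Set.EqOn X Ψ (Set.Icc u t2) := by
    apply ODE_solution_unique hlip (hXc.continuousOn)
    · intro t ht
      have ht0 : (0:ℝ) ≤ t := le_trans (by linarith) ht.1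
      have htne : t ≠ T1 := by intro h; rw [h] at ht; linarith [ht.1]
      have hd := hX' t ht0 htne
      have hgain : gain κ T1 t = 0 := by
        unfold gain
        rw [if_neg]
        rintro ⟨-, hlt⟩
        linarith [ht.1]
      have : v t (X t) = (-(ρ1 + ρ2 * gain κ T1 t)) • (sLap W).mulVec (X t) := by
        rw [hv]
        simp [ContinuousLinearMap.smul_apply, hgain, hLc, mulVecCLM_apply]
      rw [this]
      exact hd.hasDerivWithinAt
    · apply ContinuousOn.mono (s := Set.Icc u t2) ?_ (le_refl _)
      intro t _
      exact (hasDerivAt_expFlow BL (X u)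
        ((hasDerivAt_id t).sub_const u)).continuousAt.continuousWithinAt
    · intro t ht
      have hd := hasDerivAt_expFlow BL (X u) ((hasDerivAt_id t).sub_const u)
      have heq : v t (Ψ t) = (1:ℝ) • BL.mulVec (Ψ t) := by
        rw [hv]
        simp only [ContinuousLinearMap.smul_apply, one_smul, hBL, hLc, mulVecCLM_apply,
          Matrix.smul_mulVec]
      rw [heq]
      exact hd.hasDerivWithinAt
    · rw [hΨ]
      simp
  have := key (Set.right_mem_Icc.mpr hut2)
  simpa [hΨ] using this

lemma gauge_sq {g : Fin N → ℝ} (hg1 : ∀ k, g k = 1 ∨ g k = -1) (k : Fin N) :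
    g k * g k = 1 := by
  rcases hg1 k with h | h <;> rw [h] <;> norm_num

lemma sLap_mulVec_apply (W : Matrix (Fin N) (Fin N) ℝ) (x : Fin N → ℝ) (k : Fin N) :
    (sLap W).mulVec x k = (∑ m, |W k m|) * x k - ∑ l, W k l * x l := by
  simp only [sLap, Matrix.sub_mulVec, Pi.sub_apply]
  congr 1
  simp [Matrix.mulVec, dotProduct, Matrix.diagonal_apply, ite_mul, zero_mul]

lemma gauge_conj (W : Matrix (Fin N) (Fin N) ℝ) {g : Fin N → ℝ}
    (hg1 : ∀ k, g k = 1 ∨ g k = -1)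
    (hgauge : ∀ k l, g k * W k l * g l = |W k l|) (x : Fin N → ℝ) (k : Fin N) :
    g k * ((sLap W).mulVec x k) = (sLap (Wabs W)).mulVec (fun m => g m * x m) k := by
  have hterm : ∀ l, g k * (W k l * x l) = |W k l| * (g l * x l) := by
    intro l
    have h := hgauge k l
    have hsq := gauge_sq hg1 l
    linear_combination (g l * x l) * h - (g k * W k l * x l) * hsq
  rw [sLap_mulVec_apply, sLap_mulVec_apply]
  have habs : ∀ m l : Fin N, (Wabs W) m l = |W m l| := fun m l => rfl
  simp only [habs, abs_abs]
  rw [mul_sub, Finset.mul_sum]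
  congr 1
  · ring
  · exact Finset.sum_congr rfl fun l _ => hterm l

lemma M_mulVec_const (W : Matrix (Fin N) (Fin N) ℝ) (c : ℝ) :
    (sLap (Wabs W)).mulVec (fun _ => c) = 0 := by
  have h1 : sLap (Wabs W) = -(Bm W) := (neg_neg _).symm
  have h2 : (fun _ : Fin N => c) = c • (fun _ : Fin N => (1:ℝ)) := by
    funext m; simp
  rw [h1, h2, Matrix.mulVec_smul, Matrix.neg_mulVec, Bm_mulVec_one]
  simp

lemma sLap_gauge_kernel (W : Matrix (Fin N) (Fin N) ℝ) {g : Fin N → ℝ}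
    (hg1 : ∀ k, g k = 1 ∨ g k = -1)
    (hgauge : ∀ k l, g k * W k l * g l = |W k l|) (c : ℝ) :
    (sLap W).mulVec (fun k => g k * c) = 0 := by
  funext k
  have h := gauge_conj W hg1 hgauge (fun k => g k * c) k
  have h2 : (fun m => g m * (g m * c)) = fun _ : Fin N => c := by
    funext m
    rw [← mul_assoc, gauge_sq hg1 m, one_mul]
  rw [h2] at h
  rw [M_mulVec_const] at h
  have hgk : g k ≠ 0 := by
    rcases hg1 k with hk | hk <;> rw [hk] <;> norm_num
  have := mul_eq_zero.mp h
  rcases this with h' | h'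
  · exact absurd h' hgk
  · simpa using h'

end PTBC

theorem prescribed_time_bipartite_consensus_quasi_balanced
    {N : ℕ} (hN : 2 ≤ N) (W : Matrix (Fin N) (Fin N) ℝ)
    (hdiag : ∀ k, W k k = 0)
    (hQS : QuasiStronglyConnected W)
    (g : Fin N → ℝ) (hg : IsGauge W Set.univ g)
    (κ ρ1 ρ2 T1 : ℝ) (hκ : 2 < κ) (hρ1 : 0 < ρ1) (hρ2 : 0 < ρ2) (hT1 : 0 < T1)
    (X : ℝ → Fin N → ℝ) (hX : NominalTraj W κ ρ1 ρ2 T1 X) :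
    ∃ c : ℝ, ∀ t : ℝ, T1 ≤ t → ∀ k, X t k = g k * c := by
  haveI : NeZero N := ⟨by omega⟩
  obtain ⟨hXc, hX'⟩ := hX
  obtain ⟨r, hr⟩ := hQS
  have hg1 : ∀ k, g k = 1 ∨ g k = -1 := fun k => hg.1 k (Set.mem_univ k)
  have hgauge : ∀ k l, g k * W k l * g l = |W k l| :=
    fun k l => hg.2 k (Set.mem_univ k) l (Set.mem_univ l)
  have hκ0 : (0:ℝ) < κ := by linarith
  set y : ℝ → Fin N → ℝ := fun t k => g k * X t k with hy
  have hyc : Continuous y :=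
    continuous_pi fun k => continuous_const.mul ((continuous_apply k).comp hXc)
  have hy' : ∀ t, 0 ≤ t → t < T1 →
      HasDerivAt y ((-(ρ1 + ρ2 * gain κ T1 t)) • (-(PTBC.Bm W)).mulVec (y t)) t := by
    intro t ht0 htT1
    have hd := hX' t ht0 (ne_of_lt htT1)
    rw [hasDerivAt_pi] at hd ⊢
    intro k
    have hk := (hd k).const_mul (g k)
    have heq : g k * (((-(ρ1 + ρ2 * gain κ T1 t)) • (sLap W).mulVec (X t)) k)
        = ((-(ρ1 + ρ2 * gain κ T1 t)) • (-(PTBC.Bm W)).mulVec (y t)) k := by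
      have hBm : -(PTBC.Bm W) = sLap (PTBC.Wabs W) := neg_neg _
      rw [Pi.smul_apply, Pi.smul_apply, smul_eq_mul, smul_eq_mul, hBm]
      have hgc := PTBC.gauge_conj W hg1 hgauge (X t) k
      rw [← mul_assoc, mul_comm (g k) (-(ρ1 + ρ2 * gain κ T1 t)), mul_assoc, hgc]
    rw [← heq]
    exact hk
  set y0 : Fin N → ℝ := y 0 with hy0
  set F : ℝ → Fin N → ℝ := fun u => (exp (u • PTBC.Bm W)).mulVec y0 with hF
  have hyF : ∀ b, 0 ≤ b → b < T1 → y b = F (PTBC.sfun ρ1 ρ2 κ T1 b) :=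
    fun b hb0 hb => PTBC.sol_eq_expFlow W hκ0 hρ1 hρ2 hT1 hyc hy' hb0 hb
  obtain ⟨ε, hε0, hε1, hcontr⟩ := PTBC.flow_V_contract W hdiag hr
  have hFstep : ∀ n : ℕ, PTBC.Vv (F (n:ℝ)) ≤ (1 - ε)^n * PTBC.Vv (F 0) := by
    intro n
    induction n with
    | zero => simp
    | succ m ih =>
      have h1 : F ((((m:ℕ)+1 : ℕ)):ℝ) = (exp ((1:ℝ) • PTBC.Bm W)).mulVec (F (m:ℝ)) := by
        have h2 : (((m:ℕ)+1 : ℕ):ℝ) = (1:ℝ) + (m:ℝ) := by push_cast; ring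
        rw [hF]
        simp only []
        rw [h2]
        exact PTBC.flow_step W y0 1 (m:ℝ)
      rw [h1]
      calc PTBC.Vv ((exp ((1:ℝ) • PTBC.Bm W)).mulVec (F (m:ℝ)))
          ≤ (1 - ε) * PTBC.Vv (F (m:ℝ)) := hcontr _
        _ ≤ (1 - ε) * ((1 - ε)^m * PTBC.Vv (F 0)) :=
            mul_le_mul_of_nonneg_left ih (by linarith)
        _ = (1 - ε)^(m+1) * PTBC.Vv (F 0) := by ring
  have hFmono : ∀ (u w : ℝ), 0 ≤ w → PTBC.Vv (F (w + u)) ≤ PTBC.Vv (F u) := by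
    intro u w hw
    rw [hF]
    simp only []
    rw [PTBC.flow_step W y0 w u]
    exact PTBC.flow_V_noninc W hdiag hw _
  have hpair : ∀ k j, y T1 k - y T1 j ≤ 0 := by
    intro k j
    have hD : Filter.Tendsto (fun n : ℕ => (1-ε)^n * PTBC.Vv (F 0)) Filter.atTop (nhds 0) := by
      have h0 := tendsto_pow_atTop_nhds_zero_of_lt_one
        (by linarith : (0:ℝ) ≤ 1 - ε) (by linarith : 1 - ε < 1)
      simpa using h0.mul_const (PTBC.Vv (F 0))
    apply ge_of_tendsto hD
    apply Filter.Eventually.of_forall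
    intro n
    obtain ⟨b, hb0, hbT1, hnb⟩ := PTBC.sfun_escape (T1 := T1) hρ1 hρ2 hκ0 hT1 n
    have hcont_s : ContinuousOn (fun t => PTBC.sfun ρ1 ρ2 κ T1 t) (Set.Icc 0 b) :=
      fun t ht =>
        (PTBC.hasDerivAt_sfun (κ := κ) (ρ1 := ρ1) (ρ2 := ρ2)
          (lt_of_le_of_lt ht.2 hbT1)).continuousAt.continuousWithinAt
    have hmem : (n:ℝ) ∈ Set.Icc (PTBC.sfun ρ1 ρ2 κ T1 0) (PTBC.sfun ρ1 ρ2 κ T1 b) := by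
      rw [PTBC.sfun_zero]
      exact ⟨Nat.cast_nonneg n, hnb⟩
    obtain ⟨tn, htn, hstn⟩ := intermediate_value_Icc hb0 hcont_s hmem
    have htnT1 : tn < T1 := lt_of_le_of_lt htn.2 hbT1
    have hbound : ∀ t, tn ≤ t → t < T1 → y t k - y t j ≤ (1-ε)^n * PTBC.Vv (F 0) := by
      intro t htt httT1
      have ht0 : (0:ℝ) ≤ t := le_trans htn.1 htt
      have h1 : y t = F (PTBC.sfun ρ1 ρ2 κ T1 t) := hyF t ht0 httT1
      have hsle : (n:ℝ) ≤ PTBC.sfun ρ1 ρ2 κ T1 t := by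
        rw [← hstn]
        exact PTBC.sfun_mono hρ1 hρ2 hκ0 htt httT1
      have h2 : PTBC.Vv (F (PTBC.sfun ρ1 ρ2 κ T1 t)) ≤ PTBC.Vv (F (n:ℝ)) := by
        have h3 : PTBC.sfun ρ1 ρ2 κ T1 t = (PTBC.sfun ρ1 ρ2 κ T1 t - n) + n := by ring
        rw [h3]
        exact hFmono (n:ℝ) _ (by linarith)
      have h4 := PTBC.sub_le_Vv (F (PTBC.sfun ρ1 ρ2 κ T1 t)) k j
      rw [h1]
      have h5 := hFstep n
      linarith
    have htends : Filter.Tendsto (fun t => y t k - y t j) (nhdsWithin T1 (Set.Iio T1))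
        (nhds (y T1 k - y T1 j)) := by
      have hc : Continuous (fun t => y t k - y t j) :=
        ((continuous_apply k).comp hyc).sub ((continuous_apply j).comp hyc)
      exact (hc.tendsto T1).mono_left nhdsWithin_le_nhds
    apply le_of_tendsto htends
    filter_upwards [Ico_mem_nhdsLT_of_mem (Set.mem_Ioc.mpr ⟨htnT1, le_rfl⟩)] with t ht
    exact hbound t ht.1 ht.2
  have hyT1 : ∀ k, y T1 k = y T1 r := fun k =>
    le_antisymm (by linarith [hpair k r]) (by linarith [hpair r k])
  refine ⟨y T1 r, ?_⟩
  have hXT1 : ∀ k, X T1 k = g k * y T1 r := by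
    intro k
    have h1 : g k * X T1 k = y T1 r := hyT1 k
    have hsq := PTBC.gauge_sq hg1 k
    calc X T1 k = (g k * g k) * X T1 k := by rw [hsq, one_mul]
      _ = g k * (g k * X T1 k) := by ring
      _ = g k * y T1 r := by rw [h1]
  intro t htT1 k
  rcases eq_or_lt_of_le htT1 with rfl | hlt
  · exact hXT1 k
  · have hker : (sLap W).mulVec (X T1) = 0 := by
      have hXT1fun : X T1 = fun k => g k * (y T1 r) := funext hXT1
      rw [hXT1fun]
      exact PTBC.sLap_gauge_kernel W hg1 hgauge _
    set BL : Matrix (Fin N) (Fin N) ℝ := (-ρ1) • sLap W with hBL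
    have hexp : ∀ u, T1 < u → u ≤ t → X t = (exp ((t - u) • BL)).mulVec (X u) :=
      fun u hu hut => PTBC.eq_expFlow_after W hT1 hXc hX' hu hut
    set Hh : ℝ → Fin N → ℝ := fun u => (exp ((t - u) • BL)).mulVec (X u) with hHh
    have hHc : Continuous Hh := by
      apply continuous_pi
      intro k'
      have hcoord : (fun u => Hh u k') = fun u => ∑ l, (exp ((t - u) • BL)) k' l * X u l := by
        funext u
        rw [hHh]
        rfl
      rw [hcoord]
      apply continuous_finset_sum
      intro l _
      have hinner : Continuous fun u : ℝ => (t - u) • BL :=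
        (continuous_const.sub continuous_id).smul continuous_const
      exact ((PTBC.entryCLM k' l).continuous.comp
        (NormedSpace.exp_continuous.comp hinner)).mul ((continuous_apply l).comp hXc)
    have h1 : Filter.Tendsto Hh (nhdsWithin T1 (Set.Ioi T1)) (nhds (Hh T1)) :=
      (hHc.tendsto T1).mono_left nhdsWithin_le_nhds
    have heqev : Hh =ᶠ[nhdsWithin T1 (Set.Ioi T1)] (fun _ => X t) := by
      filter_upwards [Ioc_mem_nhdsGT_of_mem (Set.mem_Ico.mpr ⟨le_rfl, hlt⟩)] with u hu
      exact (hexp u hu.1 hu.2).symm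
    have h3 : X t = Hh T1 :=
      tendsto_nhds_unique (tendsto_const_nhds (α := ℝ)) (h1.congr' heqev)
    have hk2 : ((t - T1) • BL).mulVec (X T1) = 0 := by
      rw [hBL, smul_smul, Matrix.smul_mulVec, hker, smul_zero]
    have h4 : Hh T1 = X T1 := by
      rw [hHh]
      exact PTBC.exp_mulVec_of_kernel hk2
    rw [h3, h4]
    exact hXT1 k
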